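/- Let m, n be positive naturals, r = min(m, n), and let F : ℝ^{m×n} → ℝ be differentiable with L-Lipschitz gradient with respect to the Frobenius norm, i.e. ‖∇F(X) − ∇F(Y)‖_F ≤ L·‖X − Y‖_F for all X, Y. Let η > 0, λ ≥ 0, and let W, M, D be real m×n matrices with ‖D‖_F ≤ √r, ⟨M, D⟩ = ‖M‖_*, and λ·‖W‖_F ≤ 1/2. Define W' = (1 − ηλ)·W − η·D. Then ‖∇F(W)‖_F ≤ 2·(F(W) − F(W'))/η + 4√r·‖∇F(W) − M‖_F + L·η·(√r + 1/2)². -/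

import Mathlib

open Matrix

/-- Frobenius norm of a real matrix: `√ tr(Aᵀ A)`. -/
noncomputable def frobNorm {m n : ℕ} (A : Matrix (Fin m) (Fin n) ℝ) : ℝ :=
  Real.sqrt ((Aᵀ * A).trace)

/-- Nuclear norm of a real matrix: the trace of the positive semidefinite
square root of `MᵀM` (over `ℝ`, `Mᴴ = Mᵀ`). -/
noncomputable def nuclearNorm {m n : ℕ} (M : Matrix (Fin m) (Fin n) ℝ) : ℝ :=
  (((Matrix.posSemidef_conjTranspose_mul_self M).1.eigenvectorUnitary : Matrix (Fin n) (Fin n) ℝ) *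
    diagonal ((Real.sqrt ·) ∘ (Matrix.posSemidef_conjTranspose_mul_self M).1.eigenvalues) *
    (star (Matrix.posSemidef_conjTranspose_mul_self M).1.eigenvectorUnitary :
      Matrix (Fin n) (Fin n) ℝ)).trace

attribute [local instance] Matrix.frobeniusNormedAddCommGroup Matrix.frobeniusNormedSpace

/-- The continuous linear functional `W ↦ ⟨G, W⟩ = tr(Gᵀ·W)` given by the
Frobenius inner product with `G`. -/
noncomputable def frobInnerCLM {m n : ℕ} (G : Matrix (Fin m) (Fin n) ℝ) :
    Matrix (Fin m) (Fin n) ℝ →L[ℝ] ℝ :=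
  LinearMap.toContinuousLinearMap
    { toFun := fun W => (Gᵀ * W).trace
      map_add' := by intro a b; simp [Matrix.mul_add]
      map_smul' := by intro c a; simp [Matrix.mul_smul] }

lemma trace_form {m n : ℕ} (G W : Matrix (Fin m) (Fin n) ℝ) :
    (Gᵀ * W).trace = ∑ j, ∑ i, G i j * W i j := by
  simp [Matrix.trace, Matrix.diag, Matrix.mul_apply, Matrix.transpose_apply]

lemma frobNorm_eq_norm {m n : ℕ} (A : Matrix (Fin m) (Fin n) ℝ) : frobNorm A = ‖A‖ := by
  rw [frobNorm, Matrix.frobenius_norm_def, ← Real.sqrt_eq_rpow, trace_form, Finset.sum_comm]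
  congr 1
  refine Finset.sum_congr rfl fun i _ => Finset.sum_congr rfl fun j _ => ?_
  rw [show ((2:ℝ)) = ((2:ℕ):ℝ) by norm_num, Real.rpow_natCast, Real.norm_eq_abs, sq_abs, sq]

lemma frobNorm_nonneg {m n : ℕ} (A : Matrix (Fin m) (Fin n) ℝ) : 0 ≤ frobNorm A :=
  Real.sqrt_nonneg _

lemma fip_self {m n : ℕ} (A : Matrix (Fin m) (Fin n) ℝ) :
    (Aᵀ * A).trace = frobNorm A ^ 2 := by
  have h : 0 ≤ (Aᵀ * A).trace := by
    rw [trace_form]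
    exact Finset.sum_nonneg fun j _ => Finset.sum_nonneg fun i _ => mul_self_nonneg _
  rw [frobNorm, Real.sq_sqrt h]

lemma fip_le {m n : ℕ} (G W : Matrix (Fin m) (Fin n) ℝ) :
    (Gᵀ * W).trace ≤ frobNorm G * frobNorm W := by
  have h := Finset.sum_mul_sq_le_sq_mul_sq Finset.univ
      (fun p : Fin m × Fin n => G p.1 p.2) (fun p : Fin m × Fin n => W p.1 p.2)
  have hG : (Gᵀ * G).trace = ∑ p : Fin m × Fin n, G p.1 p.2 ^ 2 := by
    rw [trace_form, Fintype.sum_prod_type, Finset.sum_comm]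
    simp [sq]
  have hW : (Wᵀ * W).trace = ∑ p : Fin m × Fin n, W p.1 p.2 ^ 2 := by
    rw [trace_form, Fintype.sum_prod_type, Finset.sum_comm]
    simp [sq]
  have hGW : (Gᵀ * W).trace = ∑ p : Fin m × Fin n, G p.1 p.2 * W p.1 p.2 := by
    rw [trace_form, Fintype.sum_prod_type, Finset.sum_comm]
  calc (Gᵀ * W).trace ≤ |(Gᵀ * W).trace| := le_abs_self _
    _ = Real.sqrt ((Gᵀ * W).trace ^ 2) := (Real.sqrt_sq_eq_abs _).symm
    _ ≤ Real.sqrt ((frobNorm G * frobNorm W) ^ 2) := by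
        apply Real.sqrt_le_sqrt
        rw [mul_pow, ← fip_self, ← fip_self, hG, hW, hGW]
        exact h
    _ = frobNorm G * frobNorm W := Real.sqrt_sq (mul_nonneg (frobNorm_nonneg _) (frobNorm_nonneg _))

lemma fip_symm {m n : ℕ} (G W : Matrix (Fin m) (Fin n) ℝ) :
    (Gᵀ * W).trace = (Wᵀ * G).trace := by
  rw [trace_form, trace_form]
  exact Finset.sum_congr rfl fun j _ => Finset.sum_congr rfl fun i _ => mul_comm _ _

lemma psd_entry_sq {k : ℕ} {Q : Matrix (Fin k) (Fin k) ℝ} (hQ : Q.PosSemidef) (i j : Fin k) :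
    Q i j ^ 2 ≤ Q i i * Q j j := by
  have hsym : Q j i = Q i j := by
    have := hQ.1
    rw [Matrix.IsHermitian] at this
    conv_lhs => rw [← this]
    simp [Matrix.conjTranspose_apply]
  have key : ∀ t : ℝ, 0 ≤ Q i i * (t * t) + (2 * Q i j) * t + Q j j := by
    intro t
    have h2 := hQ.dotProduct_mulVec_nonneg (t • (Pi.single i 1 : Fin k → ℝ) + (Pi.single j 1 : Fin k → ℝ))
    simp only [star_trivial, Matrix.mulVec_add, Matrix.mulVec_smul,
      Matrix.mulVec_single, dotProduct_add, add_dotProduct, smul_dotProduct,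
      dotProduct_single, single_dotProduct, smul_eq_mul,
      Pi.smul_apply, Pi.add_apply, MulOpposite.op_one, one_smul, Matrix.col_apply] at h2
    rw [hsym] at h2
    nlinarith [h2]
  have := discrim_le_zero key
  rw [discrim] at this
  nlinarith [this]

lemma psd_diag_nonneg {k : ℕ} {Q : Matrix (Fin k) (Fin k) ℝ} (hQ : Q.PosSemidef) (i : Fin k) :
    0 ≤ Q i i := by
  have h2 := hQ.dotProduct_mulVec_nonneg (Pi.single i 1 : Fin k → ℝ)
  simpa [Matrix.mulVec_single, single_dotProduct] using h2

lemma frob_le_nuclear {m n : ℕ} (M : Matrix (Fin m) (Fin n) ℝ) :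
    frobNorm M ≤ nuclearNorm M := by
  have hS := Matrix.posSemidef_conjTranspose_mul_self M
  have hUU : (star (hS.1.eigenvectorUnitary : Matrix (Fin n) (Fin n) ℝ)) *
      (hS.1.eigenvectorUnitary : Matrix (Fin n) (Fin n) ℝ) = 1 :=
    hS.1.eigenvectorUnitary.2.1
  have hnuc : nuclearNorm M = ∑ i, Real.sqrt (hS.1.eigenvalues i) := by
    unfold nuclearNorm
    rw [Matrix.trace_mul_cycle, hUU, one_mul, Matrix.trace_diagonal]
    rfl
  have hfro : (Mᵀ * M).trace = ∑ i, hS.1.eigenvalues i := by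
    have h := hS.1.trace_eq_sum_eigenvalues
    simpa using h
  have hev : ∀ i, 0 ≤ hS.1.eigenvalues i := hS.eigenvalues_nonneg
  have htr : 0 ≤ ∑ i, Real.sqrt (hS.1.eigenvalues i) :=
    Finset.sum_nonneg fun i _ => Real.sqrt_nonneg _
  have hkey : ∑ i, hS.1.eigenvalues i ≤ (∑ i, Real.sqrt (hS.1.eigenvalues i)) ^ 2 := by
    calc ∑ i, hS.1.eigenvalues i = ∑ i, Real.sqrt (hS.1.eigenvalues i) ^ 2 :=
          Finset.sum_congr rfl fun i _ => (Real.sq_sqrt (hev i)).symm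
      _ ≤ _ := Finset.sum_sq_le_sq_sum_of_nonneg fun i _ => Real.sqrt_nonneg _
  calc frobNorm M = Real.sqrt ((Mᵀ * M).trace) := rfl
    _ = Real.sqrt (∑ i, hS.1.eigenvalues i) := by rw [hfro]
    _ ≤ Real.sqrt ((∑ i, Real.sqrt (hS.1.eigenvalues i)) ^ 2) := Real.sqrt_le_sqrt hkey
    _ = ∑ i, Real.sqrt (hS.1.eigenvalues i) := Real.sqrt_sq htr
    _ = nuclearNorm M := hnuc.symm

lemma descent {m n : ℕ} (F : Matrix (Fin m) (Fin n) ℝ → ℝ)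
    (gradF : Matrix (Fin m) (Fin n) ℝ → Matrix (Fin m) (Fin n) ℝ) (L : ℝ)
    (hdiff : ∀ X, HasFDerivAt F (frobInnerCLM (gradF X)) X)
    (hLip : ∀ X Y, frobNorm (gradF X - gradF Y) ≤ L * frobNorm (X - Y))
    (hL : 0 ≤ L) (X Y : Matrix (Fin m) (Fin n) ℝ) :
    F Y ≤ F X + ((gradF X)ᵀ * (Y - X)).trace + L / 2 * frobNorm (Y - X) ^ 2 := by
  set v := Y - X with hv
  have hcont : Continuous gradF := by
    have hlw : LipschitzWith (Real.toNNReal L) gradF := by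
      apply LipschitzWith.of_dist_le_mul
      intro x y
      rw [dist_eq_norm, dist_eq_norm, ← frobNorm_eq_norm, ← frobNorm_eq_norm,
        Real.coe_toNNReal L hL]
      exact hLip x y
    exact hlw.continuous
  set φ : ℝ → ℝ := fun t => ((gradF (X + t • v))ᵀ * v).trace with hφ
  have hderiv : ∀ t : ℝ, HasDerivAt (fun s : ℝ => F (X + s • v)) (φ t) t := by
    intro t
    have hp : HasDerivAt (fun s : ℝ => X + s • v) v t := by
      have h := ((hasDerivAt_id' t).smul_const v).const_add X
      rw [one_smul] at h
      exact h
    exact (hdiff (X + t • v)).comp_hasDerivAt t hp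
  have hpathcont : Continuous fun t : ℝ => X + t • v := by continuity
  have hφcont : Continuous φ := by
    have heq : φ = (frobInnerCLM v) ∘ (gradF ∘ fun t : ℝ => X + t • v) :=
      funext fun t => fip_symm _ _
    rw [heq]
    exact (frobInnerCLM v).continuous.comp (hcont.comp hpathcont)
  have hFTC : (∫ t in (0:ℝ)..1, φ t) = F Y - F X := by
    have h := intervalIntegral.integral_eq_sub_of_hasDerivAt
      (f := fun s : ℝ => F (X + s • v)) (f' := φ)
      (fun t _ => hderiv t) (hφcont.intervalIntegrable 0 1)
    simpa [hv] using h
  set c : ℝ := ((gradF X)ᵀ * v).trace with hc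
  set d : ℝ := frobNorm v ^ 2 with hd
  have hb : ∀ t ∈ Set.Icc (0:ℝ) 1, φ t ≤ c + L * d * t := by
    intro t ht
    have hdiffG : φ t - c = ((gradF (X + t • v) - gradF X)ᵀ * v).trace := by
      rw [hφ, hc, Matrix.transpose_sub, Matrix.sub_mul, Matrix.trace_sub]
    have h2 := fip_le (gradF (X + t • v) - gradF X) v
    have h3 : frobNorm (gradF (X + t • v) - gradF X) ≤ L * (t * frobNorm v) := by
      have hl := hLip (X + t • v) X
      rw [add_sub_cancel_left] at hl
      have he : frobNorm (t • v) = t * frobNorm v := by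
        rw [frobNorm_eq_norm, frobNorm_eq_norm, norm_smul, Real.norm_eq_abs,
          abs_of_nonneg ht.1]
      rw [he] at hl
      linarith [hl]
    have hv0 : 0 ≤ frobNorm v := frobNorm_nonneg v
    have h4 := mul_le_mul_of_nonneg_right h3 hv0
    rw [hd]
    nlinarith [hdiffG, h2, h4]
  have hrhscont : Continuous fun t : ℝ => c + L * d * t := by continuity
  have hint : (∫ t in (0:ℝ)..1, φ t) ≤ ∫ t in (0:ℝ)..1, (c + L * d * t) :=
    intervalIntegral.integral_mono_on zero_le_one (hφcont.intervalIntegrable 0 1)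
      (hrhscont.intervalIntegrable 0 1) hb
  have hval : (∫ t in (0:ℝ)..1, (c + L * d * t)) = c + L / 2 * d := by
    rw [intervalIntegral.integral_add (intervalIntegrable_const)
      (by exact (continuous_const.mul continuous_id).intervalIntegrable 0 1)]
    rw [intervalIntegral.integral_const]
    rw [intervalIntegral.integral_const_mul, integral_id]
    simp [smul_eq_mul]
    ring
  rw [hval] at hint
  rw [hFTC] at hint
  linarith [hint]

lemma frobNorm_neg {m n : ℕ} (A : Matrix (Fin m) (Fin n) ℝ) : frobNorm (-A) = frobNorm A := by
  rw [frobNorm_eq_norm, frobNorm_eq_norm, norm_neg]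

lemma fip_ge {m n : ℕ} (G W : Matrix (Fin m) (Fin n) ℝ) :
    -(frobNorm G * frobNorm W) ≤ (Gᵀ * W).trace := by
  have h := fip_le (-G) W
  rw [frobNorm_neg] at h
  have he : ((-G)ᵀ * W).trace = -((Gᵀ * W).trace) := by
    rw [Matrix.transpose_neg, Matrix.neg_mul, Matrix.trace_neg]
  rw [he] at h
  linarith

set_option maxHeartbeats 1600000 in
/-- Per-iteration descent inequality for the orthogonalized (Muon) step:
if `F` is differentiable with Frobenius gradient `gradF` which is `L`-Lipschitz,
`‖D‖_F ≤ √r`, `⟨M, D⟩ = ‖M‖_*`, and `λ·‖W‖_F ≤ 1/2`, then with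
`W' = (1 − ηλ)·W − η·D` we have
`‖∇F(W)‖_F ≤ 2(F(W) − F(W'))/η + 4√r·‖∇F(W) − M‖_F + Lη(√r + 1/2)²`. -/
theorem stmt_10 {m n : ℕ} (hm : 0 < m) (hn : 0 < n) (r : ℕ) (hr : r = min m n)
    (F : Matrix (Fin m) (Fin n) ℝ → ℝ)
    (gradF : Matrix (Fin m) (Fin n) ℝ → Matrix (Fin m) (Fin n) ℝ) (L : ℝ)
    (hdiff : ∀ X, HasFDerivAt F (frobInnerCLM (gradF X)) X)
    (hLip : ∀ X Y, frobNorm (gradF X - gradF Y) ≤ L * frobNorm (X - Y))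
    (η lam : ℝ) (hη : 0 < η) (hlam : 0 ≤ lam)
    (W M D : Matrix (Fin m) (Fin n) ℝ)
    (hD : frobNorm D ≤ Real.sqrt r)
    (hMD : (Mᵀ * D).trace = nuclearNorm M)
    (hWlam : lam * frobNorm W ≤ 1 / 2) :
    frobNorm (gradF W) ≤
      2 * (F W - F ((1 - η * lam) • W - η • D)) / η +
      4 * Real.sqrt r * frobNorm (gradF W - M) +
      L * η * (Real.sqrt r + 1 / 2) ^ 2 := by
  set G := gradF W with hG
  set W' := (1 - η * lam) • W - η • D with hW'
  set v := W' - W with hv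
  set e := frobNorm (G - M) with he
  set sr := Real.sqrt r with hsr
  set cc : ℝ := sr + 1 / 2 with hcc
  -- L is nonneg
  have hL : 0 ≤ L := by
    by_contra h
    push_neg at h
    set C : Matrix (Fin m) (Fin n) ℝ := Matrix.of fun _ _ => (1:ℝ) with hC
    have hsub : W - (W + C) = -C := by abel
    have hfc : frobNorm (W - (W + C)) = Real.sqrt (n * m) := by
      rw [hsub, frobNorm_neg, frobNorm, trace_form]
      congr 1
      simp [hC]
    have hpos : 0 < frobNorm (W - (W + C)) := by
      rw [hfc]
      apply Real.sqrt_pos.mpr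
      positivity
    have hl2 := hLip W (W + C)
    have h0 := frobNorm_nonneg (gradF W - gradF (W + C))
    nlinarith [hl2, h0, hpos]
  -- auxiliary facts
  have hsr1 : (1:ℝ) ≤ sr := by
    rw [hsr, show (1:ℝ) = Real.sqrt 1 by simp]
    apply Real.sqrt_le_sqrt
    have : 1 ≤ r := by omega
    exact_mod_cast this
  have he0 : 0 ≤ e := frobNorm_nonneg _
  have hG0 : 0 ≤ frobNorm G := frobNorm_nonneg _
  have hW0 : 0 ≤ frobNorm W := frobNorm_nonneg _
  -- v = -(η • (lam • W + D))
  have hveq : v = -(η • (lam • W + D)) := by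
    rw [hv, hW']
    ext i j
    simp [Matrix.sub_apply, Matrix.add_apply, Matrix.smul_apply, smul_eq_mul]
    ring
  -- norm of v
  have hvnorm : frobNorm v ≤ η * cc := by
    rw [hveq, frobNorm_neg, frobNorm_eq_norm, norm_smul, Real.norm_eq_abs,
      abs_of_nonneg hη.le]
    have h1 : ‖lam • W + D‖ ≤ lam * frobNorm W + frobNorm D := by
      calc ‖lam • W + D‖ ≤ ‖lam • W‖ + ‖D‖ := norm_add_le _ _
        _ = lam * frobNorm W + frobNorm D := by
            rw [norm_smul, Real.norm_eq_abs, abs_of_nonneg hlam,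
              frobNorm_eq_norm, frobNorm_eq_norm]
    have h2 : lam * frobNorm W + frobNorm D ≤ cc := by
      rw [hcc]; linarith [hWlam, hD]
    have := h1.trans h2
    nlinarith [this, hη.le]
  -- descent
  have hdes := descent F gradF L hdiff hLip hL W W'
  rw [← hv, ← hG] at hdes
  -- trace linearity
  have htr : (Gᵀ * v).trace = -(η * (lam * (Gᵀ * W).trace + (Gᵀ * D).trace)) := by
    rw [hveq]
    rw [Matrix.mul_neg, Matrix.trace_neg, Matrix.mul_smul, Matrix.trace_smul,
      Matrix.mul_add, Matrix.trace_add, Matrix.mul_smul, Matrix.trace_smul]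
    simp [smul_eq_mul]
  -- lower bound on ⟨G, D⟩
  have hGD : frobNorm G - (1 + sr) * e ≤ (Gᵀ * D).trace := by
    have e1 : (Gᵀ * D).trace = (Mᵀ * D).trace + ((G - M)ᵀ * D).trace := by
      rw [Matrix.transpose_sub, Matrix.sub_mul, Matrix.trace_sub]
      ring
    have e2 : -(e * sr) ≤ ((G - M)ᵀ * D).trace := by
      have h := fip_ge (G - M) D
      have : frobNorm (G - M) * frobNorm D ≤ e * sr := by
        rw [← he]
        exact mul_le_mul_of_nonneg_left hD he0
      linarith
    have e3 : frobNorm G - e ≤ (Mᵀ * D).trace := by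
      rw [hMD]
      have h4 : frobNorm M ≤ nuclearNorm M := frob_le_nuclear M
      have h5 : frobNorm G ≤ frobNorm M + e := by
        rw [he, frobNorm_eq_norm, frobNorm_eq_norm, frobNorm_eq_norm]
        calc ‖G‖ = ‖M + (G - M)‖ := by congr 1; abel
          _ ≤ ‖M‖ + ‖G - M‖ := norm_add_le _ _
      linarith
    rw [e1]
    linarith
  -- lower bound on ⟨G, W⟩ term
  have hGW : -(frobNorm G / 2) ≤ lam * (Gᵀ * W).trace := by
    have h := fip_ge G W
    have h2 : lam * -(frobNorm G * frobNorm W) ≤ lam * (Gᵀ * W).trace :=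
      mul_le_mul_of_nonneg_left h hlam
    have h3 : lam * (frobNorm G * frobNorm W) ≤ frobNorm G / 2 := by
      have : lam * (frobNorm G * frobNorm W) = frobNorm G * (lam * frobNorm W) := by ring
      rw [this]
      nlinarith [hG0, hWlam]
    nlinarith [h2, h3]
  -- norm of v squared
  have hvsq : frobNorm v ^ 2 ≤ η ^ 2 * cc ^ 2 := by
    have := frobNorm_nonneg v
    nlinarith [hvnorm, this]
  -- key inequality
  have key : η * (frobNorm G / 2 - (1 + sr) * e) ≤ (F W - F W') + L / 2 * (η ^ 2 * cc ^ 2) := by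
    have h1 : lam * (Gᵀ * W).trace + (Gᵀ * D).trace ≥ frobNorm G / 2 - (1 + sr) * e := by
      linarith [hGW, hGD]
    have h2 : F W' ≤ F W - η * (lam * (Gᵀ * W).trace + (Gᵀ * D).trace)
        + L / 2 * frobNorm v ^ 2 := by
      rw [htr] at hdes
      linarith [hdes]
    have h3 : L / 2 * frobNorm v ^ 2 ≤ L / 2 * (η ^ 2 * cc ^ 2) := by
      apply mul_le_mul_of_nonneg_left hvsq
      linarith
    nlinarith [h1, h2, h3, hη.le]
  -- conclude
  have hdiv : frobNorm G ≤ (2 * (F W - F W') + η * (2 * (1 + sr) * e) + η * (L * η * cc ^ 2)) / η := by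
    rw [le_div_iff₀ hη]
    nlinarith [key]
  have hrw : (2 * (F W - F W') + η * (2 * (1 + sr) * e) + η * (L * η * cc ^ 2)) / η
      = 2 * (F W - F W') / η + 2 * (1 + sr) * e + L * η * cc ^ 2 := by
    field_simp
  rw [hrw] at hdiv
  have hfin : 2 * (1 + sr) * e ≤ 4 * sr * e := by nlinarith [hsr1, he0]
  calc frobNorm G ≤ 2 * (F W - F W') / η + 2 * (1 + sr) * e + L * η * cc ^ 2 := hdiv
    _ ≤ 2 * (F W - F W') / η + 4 * sr * e + L * η * cc ^ 2 := by linarith
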